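/- If for every bipartition of the vertices of a connected graph G into two sets each inducing a connected subgraph the cut has size at least k, then the bond carving-width of G is at least k; consequently, for the n×n toroidal grid the carving-width is at least n. -/

import Mathlib

open SimpleGraph Set

/-- The set of edges of `G` crossing the bipartition `(U, Uᶜ)`. -/
def crossCut {V : Type*} (G : SimpleGraph V) (U : Set V) : Set (Sym2 V) :=
  {e | e ∈ G.edgeSet ∧ ∃ u w, u ∈ U ∧ w ∉ U ∧ e = s(u, w)}

/-- A carving-decomposition of `G`: a binary tree (all degrees 1 or 3) whose
leaves are in bijection with the vertices of `G`. -/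
structure CarvingDecomp {V : Type*} (G : SimpleGraph V) where
  N : Type
  finN : Finite N
  T : SimpleGraph N
  isTree : T.IsTree
  binary : ∀ n : N, (T.neighborSet n).ncard = 1 ∨ (T.neighborSet n).ncard = 3
  φ : V → N
  φinj : Function.Injective φ
  φleaf : ∀ v, (T.neighborSet (φ v)).ncard = 1
  leafφ : ∀ n, (T.neighborSet n).ncard = 1 → ∃ v, φ v = n

namespace CarvingDecomp

variable {V : Type*} {G : SimpleGraph V} (cd : CarvingDecomp G)

/-- The side of the vertex bipartition induced by removing the tree edge `s(a,b)`
from the carving tree, namely those vertices whose leaves remain connected to `a`. -/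
def side (a b : cd.N) : Set V :=
  {v | (cd.T.deleteEdges {s(a, b)}).Reachable (cd.φ v) a}

/-- The middle set of the tree edge `s(a,b)`: the edges of `G` crossing the
induced vertex bipartition. -/
def mid (a b : cd.N) : Set (Sym2 V) :=
  crossCut G (cd.side a b)

/-- The carving-decomposition has width at most `k`. -/
def widthLE (k : ℕ) : Prop :=
  ∀ a b : cd.N, cd.T.Adj a b → (cd.mid a b).ncard ≤ k

end CarvingDecomp

def HasCarvingWidthLE {V : Type*} (G : SimpleGraph V) (k : ℕ) : Prop :=
  ∃ cd : CarvingDecomp G, cd.widthLE k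

noncomputable def carvingWidth {V : Type*} (G : SimpleGraph V) : ℕ :=
  sInf {k | HasCarvingWidthLE G k}

/-- A tree-decomposition of `G`. -/
structure TreeDecomp {V : Type*} (G : SimpleGraph V) where
  ι : Type
  T : SimpleGraph ι
  isTree : T.IsTree
  bag : ι → Set V
  bag_finite : ∀ i, (bag i).Finite
  covers_vertex : ∀ v, ∃ i, v ∈ bag i
  covers_edge : ∀ ⦃u v⦄, G.Adj u v → ∃ i, u ∈ bag i ∧ v ∈ bag i
  subtree : ∀ v, (T.induce {i | v ∈ bag i}).Connected

/-- The tree-decomposition has width at most `k` (all bags of size at most `k+1`). -/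
def TreeDecomp.widthLE {V : Type*} {G : SimpleGraph V} (td : TreeDecomp G) (k : ℕ) : Prop :=
  ∀ i, (td.bag i).ncard ≤ k + 1

def HasTreewidthLE {V : Type*} (G : SimpleGraph V) (k : ℕ) : Prop :=
  ∃ td : TreeDecomp G, td.widthLE k

noncomputable def treewidth {V : Type*} (G : SimpleGraph V) : ℕ :=
  sInf {k | HasTreewidthLE G k}

/-- A carving-decomposition is a *bond* carving-decomposition if both sides of
the bipartition induced by every tree edge induce connected subgraphs. -/
def CarvingDecomp.IsBond {V : Type*} {G : SimpleGraph V} (cd : CarvingDecomp G) : Prop :=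
  ∀ a b : cd.N, cd.T.Adj a b →
    (G.induce (cd.side a b)).Connected ∧ (G.induce (cd.side a b)ᶜ).Connected

/-- The `n × n` toroidal grid graph. -/
def torGrid (n : ℕ) : SimpleGraph (ZMod n × ZMod n) where
  Adj u v := u ≠ v ∧
    ((u.1 = v.1 ∧ (u.2 = v.2 + 1 ∨ v.2 = u.2 + 1)) ∨
     (u.2 = v.2 ∧ (u.1 = v.1 + 1 ∨ v.1 = u.1 + 1)))
  symm := by
    constructor
    rintro u v ⟨hne, h | h⟩
    · exact ⟨hne.symm, Or.inl ⟨h.1.symm, h.2.symm⟩⟩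
    · exact ⟨hne.symm, Or.inr ⟨h.1.symm, h.2.symm⟩⟩
  loopless := by constructor; rintro u ⟨hne, -⟩; exact hne rfl


section AuxTree
open SimpleGraph Set

section TreeAux
variable {N : Type} {T : SimpleGraph N}

lemma bridge_not_reach (hT : T.IsAcyclic) {a b : N} (hab : T.Adj a b) :
    ¬ (T.deleteEdges {s(a,b)}).Reachable a b := by
  have h := (isAcyclic_iff_forall_adj_isBridge.mp hT) hab
  rw [isBridge_iff] at h
  exact h

lemma reach_side (hc : T.Connected) {a b : N} (x : N) :
    (T.deleteEdges {s(a,b)}).Reachable x a ∨ (T.deleteEdges {s(a,b)}).Reachable x b := by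
  obtain ⟨w⟩ := hc.preconnected x a
  have aux : ∀ {x y : N} (w : T.Walk x y), y = a →
      (T.deleteEdges {s(a,b)}).Reachable x a ∨ (T.deleteEdges {s(a,b)}).Reachable x b := by
    intro x y w
    induction w with
    | nil => rintro rfl; exact Or.inl (Reachable.refl _)
    | @cons x u _ h p ih =>
      intro hy
      by_cases he : s(x, u) = s(a, b)
      · rw [Sym2.eq_iff] at he
        rcases he with ⟨rfl, rfl⟩ | ⟨rfl, rfl⟩
        · exact Or.inl (Reachable.refl _)
        · exact Or.inr (Reachable.refl _)
      · have hadj : (T.deleteEdges {s(a,b)}).Adj x u := by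
          rw [deleteEdges_adj]; exact ⟨h, by simpa using he⟩
        rcases ih hy with h' | h'
        · exact Or.inl (hadj.reachable.trans h')
        · exact Or.inr (hadj.reachable.trans h')
  exact aux w rfl

lemma eq_of_reach_isolated {G : SimpleGraph N} {a x : N} (hiso : ∀ y, ¬ G.Adj a y)
    (h : G.Reachable a x) : x = a := by
  obtain ⟨w⟩ := h
  cases w with
  | nil => rfl
  | cons h p => exact absurd h (hiso _)

lemma exists_leaf_side [Finite N] (hT : T.IsTree) :
    ∀ (k : ℕ) {a b : N}, T.Adj a b → {z | (T.deleteEdges {s(a,b)}).Reachable z a}.ncard ≤ k →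
    ∃ ℓ, (T.neighborSet ℓ).ncard = 1 ∧ (T.deleteEdges {s(a,b)}).Reachable ℓ a := by
  classical
  intro k
  induction k with
  | zero =>
    intro a b hab hle
    exfalso
    have : 0 < {z | (T.deleteEdges {s(a,b)}).Reachable z a}.ncard :=
      (Set.ncard_pos (Set.toFinite _)).mpr ⟨a, Reachable.refl _⟩
    omega
  | succ k ih =>
    intro a b hab hle
    by_cases hnb : T.neighborSet a ⊆ {b}
    · refine ⟨a, ?_, Reachable.refl _⟩
      have hb : T.neighborSet a = {b} :=
        subset_antisymm hnb (by simpa [SimpleGraph.mem_neighborSet] using hab)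
      rw [hb]; exact Set.ncard_singleton b
    · rw [Set.not_subset] at hnb
      obtain ⟨c, hc, hcb⟩ := hnb
      have hcb : c ≠ b := by simpa using hcb
      have hac : T.Adj a c := hc
      have hca : T.Adj c a := hac.symm
      have hne : a ≠ b := hab.ne
      have hsub : {z | (T.deleteEdges {s(c,a)}).Reachable z c}
          ⊆ {z | (T.deleteEdges {s(a,b)}).Reachable z a} := by
        intro z hz
        obtain ⟨w⟩ := hz
        by_cases ha : a ∈ w.support
        · exact absurd ((w.dropUntil a ha).reverse.reachable)
            (bridge_not_reach hT.IsAcyclic hca)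
        · have hedges : ∀ e ∈ w.edges, e ∈ (T.deleteEdges {s(a,b)}).edgeSet := by
            intro e he
            have heT : e ∈ (T.deleteEdges {s(c,a)}).edgeSet := w.edges_subset_edgeSet he
            rw [edgeSet_deleteEdges] at heT ⊢
            refine ⟨heT.1, ?_⟩
            simp only [Set.mem_singleton_iff]
            rintro rfl
            exact ha (w.fst_mem_support_of_mem_edges he)
          have hadj : (T.deleteEdges {s(a,b)}).Adj c a := by
            rw [deleteEdges_adj]
            refine ⟨hca, ?_⟩
            intro hmem
            rcases Sym2.eq_iff.mp (Set.mem_singleton_iff.mp hmem) with ⟨h1, h2⟩ | ⟨h1, h2⟩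
            · exact hne h2
            · exact hcb h1
          exact ((w.transfer _ hedges).reachable).trans hadj.reachable
      have haout : a ∉ {z | (T.deleteEdges {s(c,a)}).Reachable z c} := by
        intro h
        exact bridge_not_reach hT.IsAcyclic hca h.symm
      have hlt : {z | (T.deleteEdges {s(c,a)}).Reachable z c}.ncard
          < {z | (T.deleteEdges {s(a,b)}).Reachable z a}.ncard := by
        refine Set.ncard_lt_ncard ?_ (Set.toFinite _)
        exact (Set.ssubset_iff_of_subset hsub).mpr ⟨a, Reachable.refl _, haout⟩
      obtain ⟨ℓ, h1, h2⟩ := ih hca (by omega)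
      exact ⟨ℓ, h1, hsub h2⟩

end TreeAux

lemma isTree_parent {N : Type} [Nonempty N] (f : N → N) (h : N → ℕ) (r : N)
    (hr : f r = r) (hh : ∀ x, x ≠ r → h x = h (f x) + 1) :
    (SimpleGraph.fromRel (fun x y => f x = y)).IsTree := by
  set G := SimpleGraph.fromRel (fun x y => f x = y) with hG
  have hfne : ∀ x, x ≠ r → x ≠ f x := by
    intro x hx he
    have h2 := hh x hx
    rw [← he] at h2
    omega
  have hadjf : ∀ x, x ≠ r → G.Adj x (f x) := by
    intro x hx
    rw [hG, fromRel_adj]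
    exact ⟨hfne x hx, Or.inl rfl⟩
  have hmono : ∀ z, h (f z) ≤ h z := by
    intro z
    by_cases hz : z = r
    · subst hz; rw [hr]
    · rw [hh z hz]; omega
  have hiter : ∀ (k : ℕ) (z), h (f^[k] z) ≤ h z := by
    intro k
    induction k with
    | zero => intro z; simp
    | succ k ih =>
      intro z
      rw [Function.iterate_succ_apply]
      exact (ih (f z)).trans (hmono z)
  constructor
  · -- Connected
    have aux : ∀ (n : ℕ) (x), h x ≤ n → G.Reachable x r := by
      intro n
      induction n with
      | zero =>
        intro x hx
        by_cases hxr : x = r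
        · subst hxr; exact Reachable.refl _
        · have := hh x hxr; omega
      | succ n ih =>
        intro x hx
        by_cases hxr : x = r
        · subst hxr; exact Reachable.refl _
        · have h1 := hh x hxr
          exact (hadjf x hxr).reachable.trans (ih (f x) (by omega))
    exact SimpleGraph.Connected.mk
      (fun x y => (aux (h x) x le_rfl).trans (aux (h y) y le_rfl).symm)
  · -- Acyclic
    rw [isAcyclic_iff_forall_adj_isBridge]
    have key : ∀ x, x ≠ r → ¬ (G.deleteEdges {s(x, f x)}).Reachable x (f x) := by
      intro x hxr hre
      have hyD : ¬ ∃ k, f^[k] (f x) = x := by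
        rintro ⟨k, hk⟩
        have h1 := hiter k (f x)
        rw [hk] at h1
        have := hh x hxr
        omega
      have main : ∀ {u v} (w : (G.deleteEdges {s(x, f x)}).Walk u v),
          (∃ k, f^[k] u = x) → (∃ k, f^[k] v = x) := by
        intro u v w
        induction w with
        | nil => exact id
        | @cons u u' _ hadj p ih =>
          intro hu
          apply ih
          rw [deleteEdges_adj] at hadj
          obtain ⟨hGadj, hnot⟩ := hadj
          rw [hG, fromRel_adj] at hGadj
          obtain ⟨hne', hfu | hfu'⟩ := hGadj
          · obtain ⟨k, hk⟩ := hu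
            cases k with
            | zero =>
              exfalso
              simp only [Function.iterate_zero, id_eq] at hk
              apply hnot
              rw [Set.mem_singleton_iff, hk, ← hfu, hk]
            | succ k =>
              rw [Function.iterate_succ_apply, hfu] at hk
              exact ⟨k, hk⟩
          · obtain ⟨k, hk⟩ := hu
            exact ⟨k + 1, by rw [Function.iterate_succ_apply, hfu', hk]⟩
      obtain ⟨w⟩ := hre
      exact hyD (main w ⟨0, rfl⟩)
    intro x y hxy
    rw [isBridge_iff]
    have hxy' := hxy
    rw [hG, fromRel_adj] at hxy'
    obtain ⟨hne, hfx | hfy⟩ := hxy'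
    · subst hfx
      have hxr : x ≠ r := by rintro rfl; exact hne hr.symm
      exact key x hxr
    · subst hfy
      have hyr : y ≠ r := by rintro rfl; exact hne hr
      intro hre
      have hsw : s(f y, y) = s(y, f y) := Sym2.eq_swap
      rw [hsw] at hre
      exact key y hyr hre.symm

end AuxTree
section CompAux
open SimpleGraph Set
variable {N : Type} {T : SimpleGraph N}

lemma isolated_after_delete {a b : N} (hnb : T.neighborSet a = {b}) :
    ∀ y, ¬ (T.deleteEdges {s(a,b)}).Adj a y := by
  intro y hy
  rw [deleteEdges_adj] at hy
  have h1 : y ∈ T.neighborSet a := hy.1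
  rw [hnb, Set.mem_singleton_iff] at h1
  subst h1
  exact hy.2 rfl

lemma comp_subset_comp (hT : T.IsTree) {b x y : N} (hbx : T.Adj b x) (hby : T.Adj b y)
    (hxy : x ≠ y) {z : N} (hz : (T.deleteEdges {s(x,b)}).Reachable z x) :
    (T.deleteEdges {s(b,y)}).Reachable z b := by
  classical
  obtain ⟨w⟩ := hz
  by_cases hb : b ∈ w.support
  · exact absurd ((w.dropUntil b hb).reachable.symm)
      (bridge_not_reach hT.IsAcyclic hbx.symm)
  · have hedges : ∀ e ∈ w.edges, e ∈ (T.deleteEdges {s(b,y)}).edgeSet := by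
      intro e he
      have h1 := w.edges_subset_edgeSet he
      rw [edgeSet_deleteEdges] at h1 ⊢
      refine ⟨h1.1, ?_⟩
      intro hmem
      rw [Set.mem_singleton_iff] at hmem
      exact hb (w.fst_mem_support_of_mem_edges (hmem ▸ he))
    have hadj : (T.deleteEdges {s(b,y)}).Adj x b := by
      rw [deleteEdges_adj]
      refine ⟨hbx.symm, ?_⟩
      intro hmem
      rcases Sym2.eq_iff.mp (Set.mem_singleton_iff.mp hmem) with ⟨h1, h2⟩ | ⟨h1, h2⟩
      · exact hbx.ne' h1
      · exact hxy h1
    exact (w.transfer _ hedges).reachable.trans hadj.reachable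

lemma comp_cover (hT : T.IsTree) {a b c d z : N} (hab : T.Adj a b)
    (hnb : T.neighborSet b = {a, c, d}) (hzb : z ≠ b)
    (hz : (T.deleteEdges {s(b,a)}).Reachable z b) :
    (T.deleteEdges {s(c,b)}).Reachable z c ∨ (T.deleteEdges {s(d,b)}).Reachable z d := by
  classical
  have main : ∀ (q : (T.deleteEdges {s(b,a)}).Walk b z), q.IsPath →
      (T.deleteEdges {s(c,b)}).Reachable z c ∨ (T.deleteEdges {s(d,b)}).Reachable z d := by
    intro q hq
    cases q with
    | nil => exact absurd rfl hzb
    | @cons _ x _ h q' =>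
      rw [SimpleGraph.Walk.cons_isPath_iff] at hq
      obtain ⟨hq', hbsup⟩ := hq
      have hTbx : T.Adj b x := (deleteEdges_adj.mp h).1
      have hxa : x ≠ a := by
        rintro rfl
        exact (deleteEdges_adj.mp h).2 (by rw [Set.mem_singleton_iff])
      have hxmem : x ∈ ({a, c, d} : Set N) := by rw [← hnb]; exact hTbx
      have hedges : ∀ (u : N), ∀ e ∈ q'.reverse.edges, e ∈ (T.deleteEdges {s(u,b)}).edgeSet := by
        intro u e he
        rw [SimpleGraph.Walk.edges_reverse, List.mem_reverse] at he
        have h1 := q'.edges_subset_edgeSet he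
        rw [edgeSet_deleteEdges] at h1 ⊢
        refine ⟨h1.1, ?_⟩
        intro hmem
        rw [Set.mem_singleton_iff] at hmem
        exact hbsup (q'.snd_mem_support_of_mem_edges (hmem ▸ he))
      rcases hxmem with rfl | rfl | rfl
      · exact absurd rfl hxa
      · exact Or.inl ⟨q'.reverse.transfer _ (hedges x)⟩
      · exact Or.inr ⟨q'.reverse.transfer _ (hedges x)⟩
  obtain ⟨w0⟩ := hz
  exact main w0.toPath.val.reverse w0.toPath.prop.reverse

lemma comp_dichot (hT : T.IsTree) {a b : N} (hab : T.Adj a b) (z : N) :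
    (¬ (T.deleteEdges {s(a,b)}).Reachable z a) ↔ (T.deleteEdges {s(b,a)}).Reachable z b := by
  have hsw : ({s(b,a)} : Set (Sym2 N)) = {s(a,b)} := by rw [Sym2.eq_swap]
  constructor
  · intro hna
    rcases reach_side hT.isConnected (a := a) (b := b) z with h | h
    · exact absurd h hna
    · rwa [hsw]
  · intro hb ha
    rw [hsw] at hb
    exact bridge_not_reach hT.IsAcyclic hab (ha.symm.trans hb)

end CompAux

namespace CarvingDecomp
open SimpleGraph Set
variable {V : Type*} {G : SimpleGraph V} (cd : CarvingDecomp G)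

lemma side_nonempty {a b : cd.N} (hab : cd.T.Adj a b) : (cd.side a b).Nonempty := by
  haveI := cd.finN
  obtain ⟨ℓ, hdeg, hre⟩ := exists_leaf_side cd.isTree _ hab le_rfl
  obtain ⟨v, rfl⟩ := cd.leafφ ℓ hdeg
  exact ⟨v, hre⟩

lemma side_compl {a b : cd.N} (hab : cd.T.Adj a b) : (cd.side a b)ᶜ = cd.side b a := by
  ext v
  exact comp_dichot cd.isTree hab (cd.φ v)

lemma side_subset_side {b x y : cd.N} (hbx : cd.T.Adj b x) (hby : cd.T.Adj b y)
    (hxy : x ≠ y) : cd.side x b ⊆ cd.side b y :=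
  fun _ hv => comp_subset_comp cd.isTree hbx hby hxy hv

lemma side_cover {a b c d : cd.N} (hab : cd.T.Adj a b)
    (hnb : cd.T.neighborSet b = {a, c, d}) (hphib : ∀ v, cd.φ v ≠ b) :
    cd.side b a ⊆ cd.side c b ∪ cd.side d b :=
  fun v hv => comp_cover cd.isTree hab hnb (hphib v) hv

end CarvingDecomp

lemma part1 : ∀ (V : Type) [Fintype V] (G : SimpleGraph V), G.Connected →
      ∀ k : ℕ,
        (∀ U : Set V, U.Nonempty → Uᶜ.Nonempty →
          (G.induce U).Connected → (G.induce Uᶜ).Connected →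
          k ≤ (crossCut G U).ncard) →
        ∀ cd : CarvingDecomp G, cd.IsBond → ∀ m : ℕ, cd.widthLE m → k ≤ m := by
  intro V _ G hG k hcut cd hbond m hw
  haveI := cd.finN
  obtain ⟨v0⟩ := hG.nonempty
  obtain ⟨b, hb⟩ := Set.ncard_eq_one.mp (cd.φleaf v0)
  have hab : cd.T.Adj (cd.φ v0) b := by
    have : b ∈ cd.T.neighborSet (cd.φ v0) := by rw [hb]; exact rfl
    exact this
  have hcne : (cd.side (cd.φ v0) b)ᶜ.Nonempty := by
    rw [cd.side_compl hab]
    exact cd.side_nonempty hab.symm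
  have hne : (cd.side (cd.φ v0) b).Nonempty := ⟨v0, SimpleGraph.Reachable.refl _⟩
  have hc := hbond (cd.φ v0) b hab
  exact (hcut (cd.side (cd.φ v0) b) hne hcne hc.1 hc.2).trans (hw (cd.φ v0) b hab)
open SimpleGraph Set in
lemma balanced_edge {V : Type*} [Fintype V] {G : SimpleGraph V} (cd : CarvingDecomp G)
    [Nonempty V] (hN : 2 ≤ Nat.card V) :
    ∃ a b, cd.T.Adj a b ∧ Nat.card V ≤ 3 * (cd.side a b).ncard ∧
      Nat.card V ≤ 3 * ((cd.side a b)ᶜ).ncard := by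
  haveI := cd.finN
  classical
  set NV := Nat.card V with hNV
  set P : Set (cd.N × cd.N) := {p | cd.T.Adj p.1 p.2} with hP
  have hPne : P.Nonempty := by
    obtain ⟨v0⟩ := ‹Nonempty V›
    obtain ⟨b, hb⟩ := Set.ncard_eq_one.mp (cd.φleaf v0)
    refine ⟨(cd.φ v0, b), ?_⟩
    show cd.T.Adj _ b
    rw [← SimpleGraph.mem_neighborSet, hb]
    rfl
  obtain ⟨p0, hp0P, hp0max⟩ := Set.exists_max_image P
      (fun p => min (cd.side p.1 p.2).ncard (cd.side p.2 p.1).ncard) (Set.toFinite P) hPne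
  have key : ∀ a b : cd.N, cd.T.Adj a b →
      (∀ q ∈ P, min (cd.side q.1 q.2).ncard (cd.side q.2 q.1).ncard ≤
        min (cd.side a b).ncard (cd.side b a).ncard) →
      (cd.side a b).ncard ≤ (cd.side b a).ncard →
      NV ≤ 3 * (cd.side a b).ncard := by
    intro a b hab hmax hle
    by_contra hcon
    push_neg at hcon
    have hsum : (cd.side a b).ncard + (cd.side b a).ncard = NV := by
      rw [← cd.side_compl hab]
      exact Set.ncard_add_ncard_compl _
    have hdeg3 : (cd.T.neighborSet b).ncard = 3 := by
      rcases cd.binary b with h1 | h3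
      · exfalso
        obtain ⟨x, hx⟩ := Set.ncard_eq_one.mp h1
        have hxa : x = a := by
          have hmm : a ∈ cd.T.neighborSet b := hab.symm
          rw [hx, Set.mem_singleton_iff] at hmm
          exact hmm.symm
        subst hxa
        have hiso := isolated_after_delete hx
        have hBsub : cd.side b x ⊆ {v | cd.φ v = b} :=
          fun v hv => eq_of_reach_isolated hiso hv.symm
        have hone : ({v | cd.φ v = b} : Set V).ncard ≤ 1 := by
          rw [Set.ncard_le_one (Set.toFinite _)]
          intro u hu w hw
          exact cd.φinj (hu.trans hw.symm)
        have hB1 : (cd.side b x).ncard ≤ 1 :=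
          le_trans (Set.ncard_le_ncard hBsub (Set.toFinite _)) hone
        omega
      · exact h3
    have hmem_a : a ∈ cd.T.neighborSet b := hab.symm
    have h2 : (cd.T.neighborSet b \ {a}).ncard = 2 := by
      rw [Set.ncard_diff_singleton_of_mem hmem_a, hdeg3]
    obtain ⟨c, d, hcd, hset⟩ := Set.ncard_eq_two.mp h2
    have hcmem : c ∈ cd.T.neighborSet b \ {a} := by rw [hset]; exact Or.inl rfl
    have hdmem : d ∈ cd.T.neighborSet b \ {a} := by rw [hset]; exact Or.inr rfl
    have hTbc : cd.T.Adj b c := hcmem.1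
    have hTbd : cd.T.Adj b d := hdmem.1
    have hca : c ≠ a := by simpa using hcmem.2
    have hda : d ≠ a := by simpa using hdmem.2
    have hnbs : cd.T.neighborSet b = {a, c, d} := by
      have hins : insert a (cd.T.neighborSet b \ {a}) = cd.T.neighborSet b := by
        rw [Set.insert_diff_singleton, Set.insert_eq_self.mpr hmem_a]
      rw [← hins, hset]
    have hphib : ∀ v, cd.φ v ≠ b := by
      intro v h
      have hl := cd.φleaf v
      rw [h, hdeg3] at hl
      omega
    have hcov := cd.side_cover hab hnbs hphib
    have final : ∀ c d : cd.N, cd.T.Adj b c → cd.T.Adj b d → c ≠ a → d ≠ a → c ≠ d →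
        cd.side b a ⊆ cd.side c b ∪ cd.side d b →
        (cd.side d b).ncard ≤ (cd.side c b).ncard → False := by
      intro c d hTbc hTbd hca hda hcd hcov hdc
      have h1 : (cd.side b a).ncard ≤ (cd.side c b).ncard + (cd.side d b).ncard :=
        (Set.ncard_le_ncard hcov (Set.toFinite _)).trans (Set.ncard_union_le _ _)
      have hA_sub : cd.side a b ⊆ cd.side b c :=
        cd.side_subset_side hab.symm hTbc (Ne.symm hca)
      have hdb_sub : cd.side d b ⊆ cd.side b c :=
        cd.side_subset_side hTbd hTbc (fun h => hcd h.symm)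
      have hdisj : Disjoint (cd.side a b) (cd.side d b) := by
        have hsub : cd.side d b ⊆ cd.side b a := cd.side_subset_side hTbd hab.symm hda
        have hd : Disjoint (cd.side a b) (cd.side b a) := by
          rw [← cd.side_compl hab]
          exact disjoint_compl_left.symm
        exact hd.mono_right hsub
      have hSbc : (cd.side a b).ncard + (cd.side d b).ncard ≤ (cd.side b c).ncard := by
        rw [← Set.ncard_union_eq hdisj (Set.toFinite _) (Set.toFinite _)]
        exact Set.ncard_le_ncard (Set.union_subset hA_sub hdb_sub) (Set.toFinite _)
      have hdne : 0 < (cd.side d b).ncard :=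
        (Set.ncard_pos (Set.toFinite _)).mpr (cd.side_nonempty hTbd.symm)
      have hmax_cb : min (cd.side c b).ncard (cd.side b c).ncard ≤
          min (cd.side a b).ncard (cd.side b a).ncard :=
        hmax (c, b) (show cd.T.Adj c b from hTbc.symm)
      omega
    rcases le_total (cd.side d b).ncard (cd.side c b).ncard with h | h
    · exact final c d hTbc hTbd hca hda hcd hcov h
    · exact final d c hTbd hTbc hda hca hcd.symm
        (by rwa [Set.union_comm] at hcov) h
  obtain ⟨a, b⟩ := p0
  have hab : cd.T.Adj a b := hp0P
  have hsum : (cd.side a b).ncard + (cd.side b a).ncard = NV := by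
    rw [← cd.side_compl hab]
    exact Set.ncard_add_ncard_compl _
  rcases le_total (cd.side a b).ncard (cd.side b a).ncard with hle | hle
  · have h1 := key a b hab (fun q hq => hp0max q hq) hle
    refine ⟨a, b, hab, h1, ?_⟩
    rw [cd.side_compl hab]
    omega
  · have hmax' : ∀ q ∈ P, min (cd.side q.1 q.2).ncard (cd.side q.2 q.1).ncard ≤
        min (cd.side b a).ncard (cd.side a b).ncard := by
      intro q hq
      exact (hp0max q hq).trans (le_of_eq (min_comm _ _))
    have h1 := key b a hab.symm hmax' hle
    refine ⟨b, a, hab.symm, h1, ?_⟩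
    rw [cd.side_compl hab.symm]
    omega
section Torus
open SimpleGraph Set

lemma ncard_prod' {α β : Type*} (s : Set α) (t : Set β) :
    (s ×ˢ t).ncard = s.ncard * t.ncard := by
  rw [← Nat.card_coe_set_eq, ← Nat.card_coe_set_eq, ← Nat.card_coe_set_eq,
    Nat.card_congr (Equiv.Set.prod s t), Nat.card_prod]

variable {n : ℕ}

lemma zmod_step [NeZero n] (S : Set (ZMod n)) (ha : ∃ a, a ∈ S) (hb : ∃ b, b ∉ S) :
    ∃ x, x ∈ S ∧ x + 1 ∉ S := by
  obtain ⟨a, ha⟩ := ha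
  obtain ⟨b, hb⟩ := hb
  have aux : ∀ (k : ℕ) (a : ZMod n), a ∈ S → a + (k : ZMod n) ∉ S →
      ∃ x, x ∈ S ∧ x + 1 ∉ S := by
    intro k
    induction k with
    | zero => intro a haS h; simp only [Nat.cast_zero, add_zero] at h; exact absurd haS h
    | succ k ih =>
      intro a haS h
      by_cases h1 : a + 1 ∈ S
      · refine ih (a + 1) h1 ?_
        have he : a + 1 + (k : ZMod n) = a + ((k + 1 : ℕ) : ZMod n) := by push_cast; ring
        rw [he]
        exact h
      · exact ⟨a, haS, h1⟩
  refine aux (b - a).val a ha ?_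
  have h1 : ((b - a).val : ZMod n) = b - a := ZMod.natCast_rightInverse _
  have h2 : a + (b - a) = b := by ring
  rw [h1, h2]
  exact hb

lemma two_ne_zero_zmod (hn : 3 ≤ n) : (2 : ZMod n) ≠ 0 := by
  haveI : NeZero n := ⟨by omega⟩
  intro h
  have h2 : ((2 : ℕ) : ZMod n) = 0 := by push_cast; exact h
  rw [ZMod.natCast_eq_zero_iff] at h2
  have := Nat.le_of_dvd (by norm_num) h2
  omega

lemma ne_add_one_zmod (hn : 3 ≤ n) (x : ZMod n) : x ≠ x + 1 := by
  intro h
  have h1 : (1 : ZMod n) = 0 := left_eq_add.mp h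
  have h2 : (2 : ZMod n) = 0 := by rw [show (2 : ZMod n) = 1 + 1 by norm_num, h1]; norm_num
  exact two_ne_zero_zmod hn h2

lemma row_edge (hn : 3 ≤ n) (U : Set (ZMod n × ZMod n)) {i x : ZMod n}
    (h1 : (i, x) ∈ U) (h2 : (i, x + 1) ∉ U) :
    s((i, x), (i, x + 1)) ∈ crossCut (torGrid n) U := by
  refine ⟨?_, (i, x), (i, x + 1), h1, h2, rfl⟩
  show (torGrid n).Adj _ _
  exact ⟨fun h => ne_add_one_zmod hn x (congrArg Prod.snd h), Or.inl ⟨rfl, Or.inr rfl⟩⟩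

lemma row_edge' (hn : 3 ≤ n) (U : Set (ZMod n × ZMod n)) {i y : ZMod n}
    (h1 : (i, y) ∉ U) (h2 : (i, y + 1) ∈ U) :
    s((i, y), (i, y + 1)) ∈ crossCut (torGrid n) U := by
  refine ⟨?_, (i, y + 1), (i, y), h2, h1, Sym2.eq_swap⟩
  show (torGrid n).Adj _ _
  exact ⟨fun h => ne_add_one_zmod hn y (congrArg Prod.snd h), Or.inl ⟨rfl, Or.inr rfl⟩⟩

lemma col_edge (hn : 3 ≤ n) (U : Set (ZMod n × ZMod n)) {j x : ZMod n}
    (h1 : (x, j) ∈ U) (h2 : (x + 1, j) ∉ U) :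
    s((x, j), (x + 1, j)) ∈ crossCut (torGrid n) U := by
  refine ⟨?_, (x, j), (x + 1, j), h1, h2, rfl⟩
  show (torGrid n).Adj _ _
  exact ⟨fun h => ne_add_one_zmod hn x (congrArg Prod.fst h), Or.inr ⟨rfl, Or.inr rfl⟩⟩

lemma col_edge' (hn : 3 ≤ n) (U : Set (ZMod n × ZMod n)) {j y : ZMod n}
    (h1 : (y, j) ∉ U) (h2 : (y + 1, j) ∈ U) :
    s((y, j), (y + 1, j)) ∈ crossCut (torGrid n) U := by
  refine ⟨?_, (y + 1, j), (y, j), h2, h1, Sym2.eq_swap⟩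
  show (torGrid n).Adj _ _
  exact ⟨fun h => ne_add_one_zmod hn y (congrArg Prod.fst h), Or.inr ⟨rfl, Or.inr rfl⟩⟩

lemma rows_mixed_bound (hn : 3 ≤ n) (U : Set (ZMod n × ZMod n))
    (h : ∀ i, (∃ j, (i, j) ∈ U) ∧ (∃ j, (i, j) ∉ U)) :
    n ≤ (crossCut (torGrid n) U).ncard := by
  haveI : NeZero n := ⟨by omega⟩
  have hstep := fun i => zmod_step {j | (i, j) ∈ U} (h i).1 (h i).2
  choose x hx1 hx2 using hstep
  have hinj : Function.Injective (fun i => s((i, x i), (i, x i + 1))) := by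
    intro i i' he
    rcases Sym2.eq_iff.mp he with ⟨h1, _⟩ | ⟨h1, _⟩
    · exact congrArg Prod.fst h1
    · exact congrArg Prod.fst h1
  have hsub : (fun i => s((i, x i), (i, x i + 1))) '' univ ⊆ crossCut (torGrid n) U := by
    rintro e ⟨i, -, rfl⟩
    exact row_edge hn U (hx1 i) (hx2 i)
  calc n = (univ : Set (ZMod n)).ncard := by rw [Set.ncard_univ, Nat.card_zmod]
    _ = ((fun i => s((i, x i), (i, x i + 1))) '' univ).ncard :=
        (Set.ncard_image_of_injective _ hinj).symm
    _ ≤ (crossCut (torGrid n) U).ncard := Set.ncard_le_ncard hsub (Set.toFinite _)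

lemma cols_mixed_bound (hn : 3 ≤ n) (U : Set (ZMod n × ZMod n))
    (h : ∀ j, (∃ i, (i, j) ∈ U) ∧ (∃ i, (i, j) ∉ U)) :
    n ≤ (crossCut (torGrid n) U).ncard := by
  haveI : NeZero n := ⟨by omega⟩
  have hstep := fun j => zmod_step {i | (i, j) ∈ U} (h j).1 (h j).2
  choose x hx1 hx2 using hstep
  have hinj : Function.Injective (fun j => s((x j, j), (x j + 1, j))) := by
    intro j j' he
    rcases Sym2.eq_iff.mp he with ⟨h1, _⟩ | ⟨h1, _⟩
    · exact congrArg Prod.snd h1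
    · exact congrArg Prod.snd h1
  have hsub : (fun j => s((x j, j), (x j + 1, j))) '' univ ⊆ crossCut (torGrid n) U := by
    rintro e ⟨j, -, rfl⟩
    exact col_edge hn U (hx1 j) (hx2 j)
  calc n = (univ : Set (ZMod n)).ncard := by rw [Set.ncard_univ, Nat.card_zmod]
    _ = ((fun j => s((x j, j), (x j + 1, j))) '' univ).ncard :=
        (Set.ncard_image_of_injective _ hinj).symm
    _ ≤ (crossCut (torGrid n) U).ncard := Set.ncard_le_ncard hsub (Set.toFinite _)

lemma crossCut_compl {W : Type*} (G : SimpleGraph W) (U : Set W) :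
    crossCut G Uᶜ = crossCut G U := by
  ext e
  constructor
  · rintro ⟨he, u, w, hu, hw, rfl⟩
    exact ⟨he, w, u, not_not.mp hw, hu, Sym2.eq_swap⟩
  · rintro ⟨he, u, w, hu, hw, rfl⟩
    exact ⟨he, w, u, hw, not_not.mpr hu, Sym2.eq_swap⟩

lemma two_add_self_ne (hn : 3 ≤ n) (x : ZMod n) : x ≠ x + 1 + 1 := by
  intro h
  have h0 : x = x + (1 + 1) := by rw [← add_assoc]; exact h
  have h1 : (1 + 1 : ZMod n) = 0 := left_eq_add.mp h0
  exact two_ne_zero_zmod hn (by rw [show (2 : ZMod n) = 1 + 1 by norm_num, h1])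

lemma mixed_rows_two (hn : 3 ≤ n) (U : Set (ZMod n × ZMod n)) (R : Set (ZMod n))
    (hR : ∀ i ∈ R, (∃ j, (i, j) ∈ U) ∧ (∃ j, (i, j) ∉ U)) :
    2 * R.ncard ≤ (crossCut (torGrid n) U).ncard := by
  haveI : NeZero n := ⟨by omega⟩
  classical
  have hstep : ∀ i, i ∈ R → ∃ x, ((i, x) ∈ U ∧ (i, x + 1) ∉ U) :=
    fun i hi => zmod_step {j | (i, j) ∈ U} (hR i hi).1 (hR i hi).2
  have hstep' : ∀ i, i ∈ R → ∃ y, ((i, y) ∉ U ∧ (i, y + 1) ∈ U) := by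
    intro i hi
    obtain ⟨y, hy1, hy2⟩ := zmod_step {j | (i, j) ∈ U}ᶜ (hR i hi).2 (by
      obtain ⟨j, hj⟩ := (hR i hi).1
      exact ⟨j, by simpa using hj⟩)
    exact ⟨y, hy1, by simpa using hy2⟩
  choose! x hx1 hx2 using hstep
  choose! y hy1 hy2 using hstep'
  set f : ZMod n → Sym2 (ZMod n × ZMod n) := fun i => s((i, x i), (i, x i + 1)) with hf
  set g : ZMod n → Sym2 (ZMod n × ZMod n) := fun i => s((i, y i), (i, y i + 1)) with hg
  have hfinj : Set.InjOn f R := by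
    intro i _ i' _ he
    rcases Sym2.eq_iff.mp he with ⟨h1, _⟩ | ⟨h1, _⟩
    · exact congrArg Prod.fst h1
    · exact congrArg Prod.fst h1
  have hginj : Set.InjOn g R := by
    intro i _ i' _ he
    rcases Sym2.eq_iff.mp he with ⟨h1, _⟩ | ⟨h1, _⟩
    · exact congrArg Prod.fst h1
    · exact congrArg Prod.fst h1
  have hfsub : f '' R ⊆ crossCut (torGrid n) U := by
    rintro e ⟨i, hi, rfl⟩
    exact row_edge hn U (hx1 i hi) (hx2 i hi)
  have hgsub : g '' R ⊆ crossCut (torGrid n) U := by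
    rintro e ⟨i, hi, rfl⟩
    exact row_edge' hn U (hy1 i hi) (hy2 i hi)
  have hdisj : Disjoint (f '' R) (g '' R) := by
    rw [Set.disjoint_left]
    rintro e ⟨i, hi, rfl⟩ ⟨i', hi', he⟩
    rcases Sym2.eq_iff.mp he with ⟨h1, h2⟩ | ⟨h1, h2⟩
    · have hii : i' = i := congrArg Prod.fst h1
      subst hii
      have hxy : y i' = x i' := congrArg Prod.snd h1
      exact (hy1 i' hi') (hxy ▸ hx1 i' hi')
    · have hii : i' = i := congrArg Prod.fst h1
      subst hii
      have e1 : y i' = x i' + 1 := congrArg Prod.snd h1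
      have e2 : y i' + 1 = x i' := congrArg Prod.snd h2
      exact two_add_self_ne hn (x i') (by rw [← e1]; exact e2.symm)
  have hcount : R.ncard + R.ncard ≤ (crossCut (torGrid n) U).ncard := by
    calc R.ncard + R.ncard = (f '' R).ncard + (g '' R).ncard := by
          rw [Set.ncard_image_of_injOn hfinj, Set.ncard_image_of_injOn hginj]
      _ = (f '' R ∪ g '' R).ncard :=
          (Set.ncard_union_eq hdisj (Set.toFinite _) (Set.toFinite _)).symm
      _ ≤ (crossCut (torGrid n) U).ncard :=
          Set.ncard_le_ncard (Set.union_subset hfsub hgsub) (Set.toFinite _)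
  omega

lemma mixed_cols_two (hn : 3 ≤ n) (U : Set (ZMod n × ZMod n)) (C : Set (ZMod n))
    (hC : ∀ j ∈ C, (∃ i, (i, j) ∈ U) ∧ (∃ i, (i, j) ∉ U)) :
    2 * C.ncard ≤ (crossCut (torGrid n) U).ncard := by
  haveI : NeZero n := ⟨by omega⟩
  classical
  have hstep : ∀ j, j ∈ C → ∃ x, ((x, j) ∈ U ∧ (x + 1, j) ∉ U) :=
    fun j hj => zmod_step {i | (i, j) ∈ U} (hC j hj).1 (hC j hj).2
  have hstep' : ∀ j, j ∈ C → ∃ y, ((y, j) ∉ U ∧ (y + 1, j) ∈ U) := by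
    intro j hj
    obtain ⟨y, hy1, hy2⟩ := zmod_step {i | (i, j) ∈ U}ᶜ (hC j hj).2 (by
      obtain ⟨i, hi⟩ := (hC j hj).1
      exact ⟨i, by simpa using hi⟩)
    exact ⟨y, hy1, by simpa using hy2⟩
  choose! x hx1 hx2 using hstep
  choose! y hy1 hy2 using hstep'
  set f : ZMod n → Sym2 (ZMod n × ZMod n) := fun j => s((x j, j), (x j + 1, j)) with hf
  set g : ZMod n → Sym2 (ZMod n × ZMod n) := fun j => s((y j, j), (y j + 1, j)) with hg
  have hfinj : Set.InjOn f C := by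
    intro j _ j' _ he
    rcases Sym2.eq_iff.mp he with ⟨h1, _⟩ | ⟨h1, _⟩
    · exact congrArg Prod.snd h1
    · exact congrArg Prod.snd h1
  have hginj : Set.InjOn g C := by
    intro j _ j' _ he
    rcases Sym2.eq_iff.mp he with ⟨h1, _⟩ | ⟨h1, _⟩
    · exact congrArg Prod.snd h1
    · exact congrArg Prod.snd h1
  have hfsub : f '' C ⊆ crossCut (torGrid n) U := by
    rintro e ⟨j, hj, rfl⟩
    exact col_edge hn U (hx1 j hj) (hx2 j hj)
  have hgsub : g '' C ⊆ crossCut (torGrid n) U := by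
    rintro e ⟨j, hj, rfl⟩
    exact col_edge' hn U (hy1 j hj) (hy2 j hj)
  have hdisj : Disjoint (f '' C) (g '' C) := by
    rw [Set.disjoint_left]
    rintro e ⟨j, hj, rfl⟩ ⟨j', hj', he⟩
    rcases Sym2.eq_iff.mp he with ⟨h1, h2⟩ | ⟨h1, h2⟩
    · have hjj : j' = j := congrArg Prod.snd h1
      subst hjj
      have hxy : y j' = x j' := congrArg Prod.fst h1
      exact (hy1 j' hj') (hxy ▸ hx1 j' hj')
    · have hjj : j' = j := congrArg Prod.snd h1
      subst hjj
      have e1 : y j' = x j' + 1 := congrArg Prod.fst h1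
      have e2 : y j' + 1 = x j' := congrArg Prod.fst h2
      exact two_add_self_ne hn (x j') (by rw [← e1]; exact e2.symm)
  have hcount : C.ncard + C.ncard ≤ (crossCut (torGrid n) U).ncard := by
    calc C.ncard + C.ncard = (f '' C).ncard + (g '' C).ncard := by
          rw [Set.ncard_image_of_injOn hfinj, Set.ncard_image_of_injOn hginj]
      _ = (f '' C ∪ g '' C).ncard :=
          (Set.ncard_union_eq hdisj (Set.toFinite _) (Set.toFinite _)).symm
      _ ≤ (crossCut (torGrid n) U).ncard :=
          Set.ncard_le_ncard (Set.union_subset hfsub hgsub) (Set.toFinite _)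
  omega

lemma caseC (hn : 3 ≤ n) (U : Set (ZMod n × ZMod n)) (i0 j0 : ZMod n)
    (hrow : ∀ j, (i0, j) ∈ U) (hcol : ∀ i, (i, j0) ∈ U)
    (hbal : n * n ≤ 3 * Uᶜ.ncard) : n ≤ (crossCut (torGrid n) U).ncard := by
  haveI : NeZero n := ⟨by omega⟩
  set R : Set (ZMod n) := {i | ∃ j, (i, j) ∉ U} with hRdef
  set C : Set (ZMod n) := {j | ∃ i, (i, j) ∉ U} with hCdef
  have hsub : Uᶜ ⊆ R ×ˢ C := by
    rintro ⟨i, j⟩ hp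
    exact ⟨⟨j, hp⟩, ⟨i, hp⟩⟩
  have hRC : Uᶜ.ncard ≤ R.ncard * C.ncard := by
    calc Uᶜ.ncard ≤ (R ×ˢ C).ncard := Set.ncard_le_ncard hsub (Set.toFinite _)
      _ = R.ncard * C.ncard := ncard_prod' R C
  have hRbound : 2 * R.ncard ≤ (crossCut (torGrid n) U).ncard := by
    refine mixed_rows_two hn U R ?_
    intro i hi
    exact ⟨⟨j0, hcol i⟩, hi⟩
  have hCbound : 2 * C.ncard ≤ (crossCut (torGrid n) U).ncard := by
    refine mixed_cols_two hn U C ?_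
    intro j hj
    exact ⟨⟨i0, hrow j⟩, hj⟩
  rcases le_total R.ncard C.ncard with hle | hle
  · by_contra hcon
    push_neg at hcon
    nlinarith [hbal, hRC, hCbound, hle, hcon]
  · by_contra hcon
    push_neg at hcon
    nlinarith [hbal, hRC, hRbound, hle, hcon]

lemma torus_iso (hn : 3 ≤ n) (U : Set (ZMod n × ZMod n))
    (h1 : n * n ≤ 3 * U.ncard) (h2 : n * n ≤ 3 * Uᶜ.ncard) :
    n ≤ (crossCut (torGrid n) U).ncard := by
  by_cases hA : ∀ i, (∃ j, (i, j) ∈ U) ∧ (∃ j, (i, j) ∉ U)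
  · exact rows_mixed_bound hn U hA
  by_cases hB : ∀ j, (∃ i, (i, j) ∈ U) ∧ (∃ i, (i, j) ∉ U)
  · exact cols_mixed_bound hn U hB
  push_neg at hA hB
  obtain ⟨i0, hi0⟩ := hA
  obtain ⟨j0, hj0⟩ := hB
  by_cases hex : ∃ j, (i0, j) ∈ U
  · have hrow : ∀ j, (i0, j) ∈ U := by
      have := hi0 hex
      simpa using this
    by_cases hex2 : ∃ i, (i, j0) ∈ U
    · have hcol : ∀ i, (i, j0) ∈ U := by
        have := hj0 hex2
        simpa using this
      exact caseC hn U i0 j0 hrow hcol h2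
    · push_neg at hex2
      exact absurd (hrow j0) (hex2 i0)
  · push_neg at hex
    by_cases hex2 : ∃ i, (i, j0) ∈ U
    · have hcol : ∀ i, (i, j0) ∈ U := by
        have := hj0 hex2
        simpa using this
      exact absurd (hcol i0) (hex j0)
    · push_neg at hex2
      rw [← crossCut_compl]
      refine caseC hn Uᶜ i0 j0 (fun j => hex j) (fun i => hex2 i) ?_
      rw [compl_compl]
      exact h1
end Torus
section Caterpillar
open SimpleGraph Set

variable (m : ℕ) (hm : 3 ≤ m)

def catF : (Fin m ⊕ Fin (m - 2)) → (Fin m ⊕ Fin (m - 2))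
  | Sum.inl k => Sum.inr ⟨min (k.val - 1) (m - 3), by omega⟩
  | Sum.inr j => Sum.inr ⟨j.val - 1, by omega⟩

def catH : (Fin m ⊕ Fin (m - 2)) → ℕ
  | Sum.inl k => min (k.val - 1) (m - 3) + 1
  | Sum.inr j => j.val

def catG : SimpleGraph (Fin m ⊕ Fin (m - 2)) :=
  SimpleGraph.fromRel (fun x y => catF m hm x = y)

lemma catF_ne_inl (y : Fin m ⊕ Fin (m - 2)) (k : Fin m) : catF m hm y ≠ Sum.inl k := by
  cases y <;> simp [catF]

lemma cat_isTree : (catG m hm).IsTree := by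
  haveI : Nonempty (Fin m ⊕ Fin (m - 2)) := ⟨Sum.inr ⟨0, by omega⟩⟩
  refine isTree_parent (catF m hm) (catH m) (Sum.inr ⟨0, by omega⟩) ?_ ?_
  · show Sum.inr _ = _
    simp [catF]
  · intro x hx
    cases x with
    | inl k => rfl
    | inr j =>
      have hj : j.val ≠ 0 := by
        intro h
        exact hx (by rw [Sum.inr.injEq]; exact Fin.ext h)
      show j.val = (j.val - 1) + 1
      omega

lemma cat_adj {x y : Fin m ⊕ Fin (m - 2)} :
    (catG m hm).Adj x y ↔ x ≠ y ∧ (catF m hm x = y ∨ catF m hm y = x) :=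
  SimpleGraph.fromRel_adj _ x y

lemma cat_nbr_leaf (k : Fin m) :
    (catG m hm).neighborSet (Sum.inl k) = {catF m hm (Sum.inl k)} := by
  ext y
  rw [SimpleGraph.mem_neighborSet, cat_adj, Set.mem_singleton_iff]
  constructor
  · rintro ⟨hne, h | h⟩
    · exact h.symm
    · exact absurd h (catF_ne_inl m hm y k)
  · rintro rfl
    exact ⟨by simp [catF], Or.inl rfl⟩

lemma cat_leaf_ncard (k : Fin m) :
    ((catG m hm).neighborSet (Sum.inl k)).ncard = 1 := by
  rw [cat_nbr_leaf]
  exact Set.ncard_singleton _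

lemma mem_nbr_inl (k : Fin m) (j : Fin (m - 2)) :
    Sum.inl k ∈ (catG m hm).neighborSet (Sum.inr j) ↔ min (k.val - 1) (m - 3) = j.val := by
  rw [SimpleGraph.mem_neighborSet, cat_adj]
  constructor
  · rintro ⟨hne, h | h⟩
    · exact absurd h (catF_ne_inl m hm _ k)
    · exact congrArg Fin.val (Sum.inr.inj h)
  · intro h
    refine ⟨by simp, Or.inr ?_⟩
    exact congrArg Sum.inr (Fin.ext h)

lemma mem_nbr_inr (j' j : Fin (m - 2)) :
    Sum.inr j' ∈ (catG m hm).neighborSet (Sum.inr j) ↔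
      j'.val ≠ j.val ∧ (j.val - 1 = j'.val ∨ j'.val - 1 = j.val) := by
  rw [SimpleGraph.mem_neighborSet, cat_adj]
  constructor
  · rintro ⟨hne, h | h⟩
    · exact ⟨fun hv => hne (congrArg Sum.inr (Fin.ext hv)).symm,
        Or.inl (congrArg Fin.val (Sum.inr.inj h))⟩
    · exact ⟨fun hv => hne (congrArg Sum.inr (Fin.ext hv)).symm,
        Or.inr (congrArg Fin.val (Sum.inr.inj h))⟩
  · rintro ⟨hne, h | h⟩
    · exact ⟨fun he => hne (congrArg Fin.val (Sum.inr.inj he)).symm,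
        Or.inl (congrArg Sum.inr (Fin.ext h))⟩
    · exact ⟨fun he => hne (congrArg Fin.val (Sum.inr.inj he)).symm,
        Or.inr (congrArg Sum.inr (Fin.ext h))⟩

lemma cat_spine_ncard (j : Fin (m - 2)) :
    ((catG m hm).neighborSet (Sum.inr j)).ncard = 3 := by
  have hjlt : j.val < m - 2 := j.isLt
  have hext : ∀ (a b c : Fin m ⊕ Fin (m - 2)), a ≠ b → a ≠ c → b ≠ c →
      (catG m hm).neighborSet (Sum.inr j) = {a, b, c} →
      ((catG m hm).neighborSet (Sum.inr j)).ncard = 3 := by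
    intro a b c hab hac hbc hset
    rw [hset, Set.ncard_insert_of_notMem (by simp [hab, hac]),
      Set.ncard_insert_of_notMem (by simp [hbc]), Set.ncard_singleton]
  rcases Nat.lt_or_ge j.val 1 with hj0 | hjpos
  · have hj : j.val = 0 := by omega
    rcases Nat.lt_or_ge m 4 with hm4 | hm4
    · have hm3 : m = 3 := by omega
      refine hext (Sum.inl ⟨0, by omega⟩) (Sum.inl ⟨1, by omega⟩) (Sum.inl ⟨2, by omega⟩)
        (by refine fun h => ?_; simp only [Sum.inl.injEq, Sum.inr.injEq, Fin.ext_iff, reduceCtorEq] at h <;> omega) (by refine fun h => ?_; simp only [Sum.inl.injEq, Sum.inr.injEq, Fin.ext_iff, reduceCtorEq] at h <;> omega) (by refine fun h => ?_; simp only [Sum.inl.injEq, Sum.inr.injEq, Fin.ext_iff, reduceCtorEq] at h <;> omega) ?_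
      ext y
      cases y with
      | inl k =>
        rw [mem_nbr_inl]
        have hk := k.isLt
        simp only [Set.mem_insert_iff, Set.mem_singleton_iff, Sum.inl.injEq, Sum.inr.injEq,
          Fin.ext_iff, reduceCtorEq, false_or, or_false, iff_false, iff_true]
        omega
      | inr j' =>
        rw [mem_nbr_inr]
        have hj' := j'.isLt
        simp only [Set.mem_insert_iff, Set.mem_singleton_iff, Sum.inl.injEq, Sum.inr.injEq,
          Fin.ext_iff, reduceCtorEq, false_or, or_false, iff_false, iff_true]
        omega
    · refine hext (Sum.inl ⟨0, by omega⟩) (Sum.inl ⟨1, by omega⟩) (Sum.inr ⟨1, by omega⟩)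
        (by refine fun h => ?_; simp only [Sum.inl.injEq, Sum.inr.injEq, Fin.ext_iff, reduceCtorEq] at h <;> omega) (by refine fun h => ?_; simp only [Sum.inl.injEq, Sum.inr.injEq, Fin.ext_iff, reduceCtorEq] at h <;> omega) (by refine fun h => ?_; simp only [Sum.inl.injEq, Sum.inr.injEq, Fin.ext_iff, reduceCtorEq] at h <;> omega) ?_
      ext y
      cases y with
      | inl k =>
        rw [mem_nbr_inl]
        have hk := k.isLt
        simp only [Set.mem_insert_iff, Set.mem_singleton_iff, Sum.inl.injEq, Sum.inr.injEq,
          Fin.ext_iff, reduceCtorEq, false_or, or_false, iff_false, iff_true]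
        omega
      | inr j' =>
        rw [mem_nbr_inr]
        have hj' := j'.isLt
        simp only [Set.mem_insert_iff, Set.mem_singleton_iff, Sum.inl.injEq, Sum.inr.injEq,
          Fin.ext_iff, reduceCtorEq, false_or, or_false, iff_false, iff_true]
        omega
  · rcases Nat.lt_or_ge j.val (m - 3) with hjmid | hjend
    · refine hext (Sum.inr ⟨j.val - 1, by omega⟩) (Sum.inr ⟨j.val + 1, by omega⟩)
        (Sum.inl ⟨j.val + 1, by omega⟩)
        (by refine fun h => ?_; simp only [Sum.inl.injEq, Sum.inr.injEq, Fin.ext_iff, reduceCtorEq] at h <;> omega) (by refine fun h => ?_; simp only [Sum.inl.injEq, Sum.inr.injEq, Fin.ext_iff, reduceCtorEq] at h <;> omega) (by refine fun h => ?_; simp only [Sum.inl.injEq, Sum.inr.injEq, Fin.ext_iff, reduceCtorEq] at h <;> omega) ?_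
      ext y
      cases y with
      | inl k =>
        rw [mem_nbr_inl]
        have hk := k.isLt
        simp only [Set.mem_insert_iff, Set.mem_singleton_iff, Sum.inl.injEq, Sum.inr.injEq,
          Fin.ext_iff, reduceCtorEq, false_or, or_false, iff_false, iff_true]
        omega
      | inr j' =>
        rw [mem_nbr_inr]
        have hj' := j'.isLt
        simp only [Set.mem_insert_iff, Set.mem_singleton_iff, Sum.inl.injEq, Sum.inr.injEq,
          Fin.ext_iff, reduceCtorEq, false_or, or_false, iff_false, iff_true]
        omega
    · refine hext (Sum.inr ⟨j.val - 1, by omega⟩) (Sum.inl ⟨m - 2, by omega⟩)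
        (Sum.inl ⟨m - 1, by omega⟩)
        (by refine fun h => ?_; simp only [Sum.inl.injEq, Sum.inr.injEq, Fin.ext_iff, reduceCtorEq] at h <;> omega) (by refine fun h => ?_; simp only [Sum.inl.injEq, Sum.inr.injEq, Fin.ext_iff, reduceCtorEq] at h <;> omega) (by refine fun h => ?_; simp only [Sum.inl.injEq, Sum.inr.injEq, Fin.ext_iff, reduceCtorEq] at h <;> omega) ?_
      ext y
      cases y with
      | inl k =>
        rw [mem_nbr_inl]
        have hk := k.isLt
        simp only [Set.mem_insert_iff, Set.mem_singleton_iff, Sum.inl.injEq, Sum.inr.injEq,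
          Fin.ext_iff, reduceCtorEq, false_or, or_false, iff_false, iff_true]
        omega
      | inr j' =>
        rw [mem_nbr_inr]
        have hj' := j'.isLt
        simp only [Set.mem_insert_iff, Set.mem_singleton_iff, Sum.inl.injEq, Sum.inr.injEq,
          Fin.ext_iff, reduceCtorEq, false_or, or_false, iff_false, iff_true]
        omega

end Caterpillar

section Caterpillar2
open SimpleGraph Set

noncomputable def catDecomp {V : Type*} [Fintype V] (G : SimpleGraph V)
    (hm : 3 ≤ Fintype.card V) : CarvingDecomp G where
  N := Fin (Fintype.card V) ⊕ Fin (Fintype.card V - 2)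
  finN := inferInstance
  T := catG (Fintype.card V) hm
  isTree := cat_isTree _ hm
  binary := by
    intro x
    cases x with
    | inl k => exact Or.inl (cat_leaf_ncard _ hm k)
    | inr j => exact Or.inr (cat_spine_ncard _ hm j)
  φ := fun v => Sum.inl (Fintype.equivFin V v)
  φinj := fun u v h => (Fintype.equivFin V).injective (Sum.inl.inj h)
  φleaf := fun v => cat_leaf_ncard _ hm _
  leafφ := by
    intro x hx
    cases x with
    | inl k => exact ⟨(Fintype.equivFin V).symm k, by simp⟩
    | inr j =>
      rw [cat_spine_ncard _ hm j] at hx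
      omega

lemma hasCarvingWidthLE_of_card {V : Type*} [Fintype V] (G : SimpleGraph V)
    (hm : 3 ≤ Fintype.card V) : HasCarvingWidthLE G (Nat.card (Sym2 V)) := by
  refine ⟨catDecomp G hm, ?_⟩
  intro a b _
  calc ((catDecomp G hm).mid a b).ncard ≤ (Set.univ : Set (Sym2 V)).ncard :=
        Set.ncard_le_ncard (Set.subset_univ _) Set.finite_univ
    _ = Nat.card (Sym2 V) := Set.ncard_univ _

end Caterpillar2
/-- if every bipartition of a connected graph `G` into two
nonempty sets, each inducing a connected subgraph, is crossed by at least `k`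
edges, then every bond carving-decomposition has width at least `k`.
Consequently the `n × n` toroidal grid has carving-width at least `n`. -/
theorem stmt18 :
    (∀ (V : Type) [Fintype V] (G : SimpleGraph V), G.Connected →
      ∀ k : ℕ,
        (∀ U : Set V, U.Nonempty → Uᶜ.Nonempty →
          (G.induce U).Connected → (G.induce Uᶜ).Connected →
          k ≤ (crossCut G U).ncard) →
        ∀ cd : CarvingDecomp G, cd.IsBond → ∀ m : ℕ, cd.widthLE m → k ≤ m) ∧
      (∀ n : ℕ, 3 ≤ n → n ≤ carvingWidth (torGrid n)) := by
  constructor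
  · exact part1
  · intro n hn
    haveI : NeZero n := ⟨by omega⟩
    have hnn : 9 ≤ n * n := Nat.mul_le_mul hn hn
    have hcard : Nat.card (ZMod n × ZMod n) = n * n := by
      rw [Nat.card_prod, Nat.card_zmod]
    have hlow : ∀ k ∈ {k | HasCarvingWidthLE (torGrid n) k}, n ≤ k := by
      rintro k ⟨cd, hw⟩
      obtain ⟨a, b, hab, h1, h2⟩ := balanced_edge cd (by rw [hcard]; omega)
      rw [hcard] at h1 h2
      exact (torus_iso hn (cd.side a b) h1 h2).trans (hw a b hab)
    have hne : {k | HasCarvingWidthLE (torGrid n) k}.Nonempty := by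
      refine ⟨_, hasCarvingWidthLE_of_card (torGrid n) ?_⟩
      rw [Fintype.card_prod, ZMod.card]
      exact le_trans (by omega) (Nat.le_mul_of_pos_left n (by omega))
    exact le_csInf hne hlow
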